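/- arXiv:0709.0290 — 3 statements merged into one kernel-verified Lean document; each statement's English description precedes it below -/
import Mathlib

section
/- For n ≥ 4, the complete graph K_n is not Z_2×Z_2-cordial. -/
open SimpleGraph

/-- Induced edge label: the sum of the endpoint labels. -/
def edgeLabel {V A : Type*} [AddCommMonoid A] (f : V → A) : Sym2 V → A :=
  Sym2.lift ⟨fun u v => f u + f v, fun u v => add_comm (f u) (f v)⟩

/-- `f` is an `A`-cordial labeling of `G`: vertex label classes and induced
edge label classes are balanced. -/
def IsCordialLabeling {V : Type*} [Fintype V] (G : SimpleGraph V) {A : Type*} [AddCommMonoid A]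
    (f : V → A) : Prop :=
  (∀ a b : A, |({v : V | f v = a}.ncard : ℤ) - ({v : V | f v = b}.ncard : ℤ)| ≤ 1) ∧
  (∀ a b : A, |({e ∈ G.edgeSet | edgeLabel f e = a}.ncard : ℤ)
      - ({e ∈ G.edgeSet | edgeLabel f e = b}.ncard : ℤ)| ≤ 1)

/-- `G` is `A`-cordial. -/
def IsCordial {V : Type*} [Fintype V] (G : SimpleGraph V) (A : Type*) [AddCommMonoid A] : Prop :=
  ∃ f : V → A, IsCordialLabeling G f

open Finset

lemma quad3 (x y z : ℤ) (hx : |x| ≤ 1) (hy : |y| ≤ 1) (hz : |z| ≤ 1)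
    (hxy : |x - y| ≤ 1) (hxz : |x - z| ≤ 1) (hyz : |y - z| ≤ 1) :
    4*(x^2+y^2+z^2) ≤ (x+y+z)^2 + 4 := by
  rw [abs_le] at hx hy hz hxy hxz hyz
  obtain ⟨hx1,hx2⟩ := hx; obtain ⟨hy1,hy2⟩ := hy; obtain ⟨hz1,hz2⟩ := hz
  interval_cases x <;> interval_cases y <;> interval_cases z <;> omega

lemma quad (a b c d : ℤ) (hab : |a - b| ≤ 1) (hac : |a - c| ≤ 1) (had : |a - d| ≤ 1)
    (hbc : |b - c| ≤ 1) (hbd : |b - d| ≤ 1) (hcd : |c - d| ≤ 1) :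
    4*(a^2+b^2+c^2+d^2) ≤ (a+b+c+d)^2 + 4 := by
  have hx : |b - a| ≤ 1 := by rwa [abs_sub_comm]
  have hy : |c - a| ≤ 1 := by rwa [abs_sub_comm]
  have hz : |d - a| ≤ 1 := by rwa [abs_sub_comm]
  have hxy : |(b - a) - (c - a)| ≤ 1 := by rwa [show (b-a)-(c-a) = b - c by ring]
  have hxz : |(b - a) - (d - a)| ≤ 1 := by rwa [show (b-a)-(d-a) = b - d by ring]
  have hyz : |(c - a) - (d - a)| ≤ 1 := by rwa [show (c-a)-(d-a) = c - d by ring]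
  have := quad3 (b - a) (c - a) (d - a) hx hy hz hxy hxz hyz
  nlinarith [this]

lemma sumA (g : ZMod 2 × ZMod 2 → ℕ) :
    ∑ a : ZMod 2 × ZMod 2, g a = g (0,0) + g (0,1) + g (1,0) + g (1,1) := by
  have h2 : ∀ h : ZMod 2 → ℕ, ∑ x : ZMod 2, h x = h 0 + h 1 := fun h => Fin.sum_univ_two h
  rw [Fintype.sum_prod_type, h2, h2, h2]; omega

theorem stmt_1 : ∀ n : ℕ, 4 ≤ n →
    ¬ IsCordial (⊤ : SimpleGraph (Fin n)) (ZMod 2 × ZMod 2) := by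
  rintro n hn ⟨f, hv, he⟩
  classical
  -- vertex class sizes
  set Nv : ZMod 2 × ZMod 2 → ℕ := fun a => #(univ.filter fun v => f v = a) with hNvdef
  have hNv : ∀ a, {v : Fin n | f v = a}.ncard = Nv a := by
    intro a
    rw [show {v : Fin n | f v = a} = ↑(univ.filter fun v => f v = a) by ext v; simp]
    exact Set.ncard_coe_finset _
  have hvsum : ∑ a : ZMod 2 × ZMod 2, Nv a = n := by
    have := Finset.card_eq_sum_card_fiberwise
      (fun (v : Fin n) (_ : v ∈ univ) => mem_univ (f v))
    simpa using this.symm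
  -- edge class sizes
  set Ec : ZMod 2 × ZMod 2 → ℕ :=
    fun c => #((⊤ : SimpleGraph (Fin n)).edgeFinset.filter fun e => edgeLabel f e = c)
    with hEcdef
  have hEc : ∀ c, {e ∈ (⊤ : SimpleGraph (Fin n)).edgeSet | edgeLabel f e = c}.ncard = Ec c := by
    intro c
    rw [show {e ∈ (⊤ : SimpleGraph (Fin n)).edgeSet | edgeLabel f e = c}
        = ↑((⊤ : SimpleGraph (Fin n)).edgeFinset.filter fun e => edgeLabel f e = c) by
      ext e; simp [Set.mem_setOf_eq]]
    exact Set.ncard_coe_finset _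
  set m : ℕ := #(⊤ : SimpleGraph (Fin n)).edgeFinset with hmdef
  have hesum : ∑ c : ZMod 2 × ZMod 2, Ec c = m :=
    (Finset.card_eq_sum_card_fiberwise
      (fun e (_ : e ∈ (⊤ : SimpleGraph (Fin n)).edgeFinset) => mem_univ (edgeLabel f e))).symm
  -- total ordered pairs
  have hdiag : #(univ.filter fun p : Fin n × Fin n => p.1 = p.2) = n := by
    rw [show (univ.filter fun p : Fin n × Fin n => p.1 = p.2) = (univ : Finset (Fin n)).diag by
      ext p; simp [Finset.mem_diag]]
    rw [Finset.diag_card, card_univ, Fintype.card_fin]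
  have hpairs : #(univ : Finset (Fin n × Fin n)) = n * n := by
    rw [card_univ, Fintype.card_prod, Fintype.card_fin]
  -- 2 * m = n^2 - n
  have h2m : 2 * m + n = n * n := by
    have h1 := (⊤ : SimpleGraph (Fin n)).two_mul_card_edgeFinset
    have h2 := Finset.card_filter_add_card_filter_not
      (s := (univ : Finset (Fin n × Fin n))) (p := fun p => p.1 = p.2)
    simp only [top_adj] at h1
    rw [hpairs, hdiag] at h2
    have h1' : 2 * m = #(univ.filter fun p : Fin n × Fin n => ¬ p.1 = p.2) := by
      rw [hmdef, h1]
    omega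
  -- graph of same-label pairs
  have hA0 : ∀ x y : ZMod 2 × ZMod 2, x + y = 0 ↔ x = y := by decide
  set G0 : SimpleGraph (Fin n) := SimpleGraph.fromRel (fun u v => f u = f v) with hG0
  have hset : ((⊤ : SimpleGraph (Fin n)).edgeFinset.filter fun e => edgeLabel f e = 0)
      = G0.edgeFinset := by
    ext e
    induction e using Sym2.ind with
    | _ u v =>
      rw [Finset.mem_filter]
      simp only [mem_filter, mem_edgeFinset, mem_edgeSet, top_adj, hG0,
        SimpleGraph.fromRel_adj, edgeLabel, Sym2.lift_mk, hA0]
      constructor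
      · rintro ⟨h1, h2⟩; exact ⟨h1, Or.inl h2⟩
      · rintro ⟨h1, h2⟩; exact ⟨h1, h2.elim id Eq.symm⟩
  have he0 : Ec 0 = #G0.edgeFinset := congrArg Finset.card hset
  have h1 := G0.two_mul_card_edgeFinset
  have hfe : (univ.filter fun ((x,y) : Fin n × Fin n) => G0.Adj x y)
      = univ.filter (fun p : Fin n × Fin n => ¬ p.1 = p.2 ∧ f p.1 = f p.2) := by
    ext ⟨x, y⟩
    simp only [mem_filter, mem_univ, true_and, hG0, SimpleGraph.fromRel_adj]
    constructor
    · rintro ⟨h1, h2⟩; exact ⟨h1, h2.elim id Eq.symm⟩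
    · rintro ⟨h1, h2⟩; exact ⟨h1, Or.inl h2⟩
  rw [hfe] at h1
  -- counting same-label ordered pairs
  have hsame : #(univ.filter fun p : Fin n × Fin n => f p.1 = f p.2)
      = ∑ a : ZMod 2 × ZMod 2, Nv a ^ 2 := by
    rw [Finset.card_eq_sum_card_fiberwise
      (fun (p : Fin n × Fin n) (_ : p ∈ univ.filter fun p : Fin n × Fin n => f p.1 = f p.2) => mem_univ (f p.1))]
    refine Finset.sum_congr rfl fun a _ => ?_
    rw [filter_filter]
    have : (univ.filter fun p : Fin n × Fin n => (f p.1 = f p.2 ∧ f p.1 = a))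
        = (univ.filter fun v => f v = a) ×ˢ (univ.filter fun v => f v = a) := by
      ext ⟨u, v⟩
      simp only [mem_filter, mem_univ, true_and, Finset.mem_product]
      constructor
      · rintro ⟨h1, h2⟩; exact ⟨h2, h2 ▸ h1.symm ▸ rfl⟩
      · rintro ⟨h1, h2⟩; exact ⟨h1.trans h2.symm, h1⟩
    rw [this, Finset.card_product, sq]
  have hsplit := Finset.card_filter_add_card_filter_not
    (s := univ.filter fun p : Fin n × Fin n => f p.1 = f p.2) (p := fun p => p.1 = p.2)
  rw [filter_filter, filter_filter] at hsplit
  have hd2 : (univ.filter fun p : Fin n × Fin n => f p.1 = f p.2 ∧ p.1 = p.2)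
      = univ.filter fun p : Fin n × Fin n => p.1 = p.2 := by
    ext ⟨u, v⟩
    simp only [mem_filter, mem_univ, true_and]
    exact ⟨fun h => h.2, fun h => ⟨by rw [h], h⟩⟩
  have hoff : (univ.filter fun p : Fin n × Fin n => f p.1 = f p.2 ∧ ¬ p.1 = p.2)
      = univ.filter (fun p : Fin n × Fin n => ¬ p.1 = p.2 ∧ f p.1 = f p.2) := by
    ext p; simp only [mem_filter]; tauto
  rw [hd2, hdiag, hoff, hsame] at hsplit
  -- 2 * Ec 0 + n = sum of squares
  have h2e0 : 2 * Ec 0 + n = ∑ a : ZMod 2 × ZMod 2, Nv a ^ 2 := by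
    rw [he0]; omega
  -- balance hypotheses
  have hvb : ∀ a b, |(Nv a : ℤ) - Nv b| ≤ 1 := fun a b => by
    have := hv a b; rwa [hNv, hNv] at this
  have heb : ∀ c, (Ec c : ℤ) ≤ Ec 0 + 1 := fun c => by
    have := he 0 c; rw [hEc, hEc, abs_le] at this; omega
  have hm4 : (m : ℤ) ≤ 4 * Ec 0 + 3 := by
    have h := sumA Ec
    rw [hesum] at h
    have h00 := heb (0,0); have h01 := heb (0,1)
    have h10 := heb (1,0); have h11 := heb (1,1)
    have h0 : Ec (0,0) = Ec 0 := rfl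
    push_cast [h] at *
    omega
  have hq := quad (Nv (0,0) : ℤ) (Nv (0,1)) (Nv (1,0)) (Nv (1,1))
    (hvb _ _) (hvb _ _) (hvb _ _) (hvb _ _) (hvb _ _) (hvb _ _)
  have hS : ∑ a : ZMod 2 × ZMod 2, Nv a ^ 2
      = Nv (0,0) ^ 2 + Nv (0,1) ^ 2 + Nv (1,0) ^ 2 + Nv (1,1) ^ 2 := sumA _
  have hn4 : Nv (0,0) + Nv (0,1) + Nv (1,0) + Nv (1,1) = n := by
    rw [← hvsum, sumA]
  -- final arithmetic
  have e1 : (2 * (Ec 0 : ℤ)) + n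
      = (Nv (0,0) : ℤ) ^ 2 + (Nv (0,1) : ℤ) ^ 2 + (Nv (1,0) : ℤ) ^ 2 + (Nv (1,1) : ℤ) ^ 2 := by
    exact_mod_cast h2e0.trans hS
  have e2 : (2 * (m : ℤ)) + n = (n : ℤ) * n := by exact_mod_cast h2m
  have e3 : ((Nv (0,0) : ℤ)) + Nv (0,1) + Nv (1,0) + Nv (1,1) = n := by exact_mod_cast hn4
  have e4 : ((n : ℤ)) * n = ((Nv (0,0) : ℤ) + Nv (0,1) + Nv (1,0) + Nv (1,1)) ^ 2 := by
    rw [e3]; ring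
  have hn' : (4 : ℤ) ≤ n := by exact_mod_cast hn
  linarith [hq, e1, e2, hm4, hn']
end

section
/- The star K_{1,n} is Z_2×Z_2-cordial for every n ≥ 1. -/
open SimpleGraph

/-- count of `k ∈ [1, n]` with `k % 4 = j`. -/
def cnt (j n : ℕ) : ℕ := ((Finset.range n).filter fun i => (i + 1) % 4 = j).card

lemma cnt_eq (j : ℕ) (hj : j < 4) (n : ℕ) : cnt j n = (n + (4 - j) % 4) / 4 := by
  induction n with
  | zero => simp only [cnt, Finset.range_zero, Finset.filter_empty, Finset.card_empty]; omega
  | succ n ih =>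
    rw [cnt, Finset.range_add_one, Finset.filter_insert]
    split <;> rename_i h
    · rw [Finset.card_insert_of_notMem (by simp), ← cnt.eq_def, ih]; omega
    · rw [← cnt.eq_def, ih]; omega

def gfun : Fin 4 → ZMod 2 × ZMod 2 := ![(0,0),(0,1),(1,0),(1,1)]

def lab (i : ℕ) : ZMod 2 × ZMod 2 := gfun ⟨(i+1)%4, Nat.mod_lt _ (by norm_num)⟩

lemma gfun_inj : Function.Injective gfun := by decide

lemma gfun_surj : Function.Surjective gfun := by decide

lemma leaf_ncard (n : ℕ) (j : Fin 4) :
    {i : Fin n | lab i.val = gfun j}.ncard = cnt j.val n := by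
  rw [Set.ncard_eq_toFinset_card']
  simp only [Set.toFinset_setOf]
  have h1 : ∀ i : Fin n, (lab i.val = gfun j) ↔ ((i.val + 1) % 4 = j.val) := by
    intro i
    unfold lab
    constructor
    · intro h; exact congrArg Fin.val (gfun_inj h)
    · intro h; congr 1; exact Fin.ext h
  simp only [h1]
  rw [cnt.eq_def, ← Nat.Iio_eq_range, ← Fin.map_valEmbedding_univ, Finset.filter_map,
    Finset.card_map]
  rfl

lemma vert_ncard (n : ℕ) (j : Fin 4) :
    {v : Fin 1 ⊕ Fin n | Sum.elim (fun _ => gfun 0) (fun i : Fin n => lab i.val) v = gfun j}.ncard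
      = (if j = 0 then 1 else 0) + cnt j.val n := by
  have hset : {v : Fin 1 ⊕ Fin n | Sum.elim (fun _ => gfun 0) (fun i : Fin n => lab i.val) v = gfun j}
      = Sum.inl '' {_x : Fin 1 | gfun 0 = gfun j} ∪ Sum.inr '' {i : Fin n | lab i.val = gfun j} := by
    ext v; cases v <;> simp
  rw [hset, Set.ncard_union_eq ?_ (Set.toFinite _) (Set.toFinite _),
    Set.ncard_image_of_injective _ Sum.inl_injective,
    Set.ncard_image_of_injective _ Sum.inr_injective, leaf_ncard]
  · congr 1
    by_cases h : j = 0
    · subst h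
      have : {_x : Fin 1 | gfun 0 = gfun 0} = Set.univ := by ext; simp
      rw [this, Set.ncard_univ]; simp
    · have h2 : {_x : Fin 1 | gfun 0 = gfun j} = ∅ := by
        ext x; simp only [Set.mem_setOf_eq, Set.mem_empty_iff_false, iff_false]
        exact fun h' => h (gfun_inj h').symm
      rw [h2, Set.ncard_empty]; simp [h]
  · rw [Set.disjoint_left]
    rintro a ⟨x, -, rfl⟩ ⟨y, -, h⟩
    exact Sum.inl_ne_inr h.symm

lemma edge_ncard (n : ℕ) (j : Fin 4) :
    {e ∈ (completeBipartiteGraph (Fin 1) (Fin n)).edgeSet |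
      edgeLabel (Sum.elim (fun _ => gfun 0) (fun i : Fin n => lab i.val)) e = gfun j}.ncard
      = cnt j.val n := by
  have hz : gfun 0 = 0 := by decide
  have hinj : Function.Injective
      (fun i : Fin n => s(Sum.inl (0:Fin 1), Sum.inr i) : Fin n → Sym2 (Fin 1 ⊕ Fin n)) := by
    intro a b h
    simp only [Sym2.eq_iff] at h
    rcases h with ⟨-, h⟩ | ⟨h, -⟩
    · exact Sum.inr_injective h
    · exact absurd h (by simp)
  have hset : {e ∈ (completeBipartiteGraph (Fin 1) (Fin n)).edgeSet |
        edgeLabel (Sum.elim (fun _ => gfun 0) (fun i : Fin n => lab i.val)) e = gfun j}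
      = (fun i : Fin n => s(Sum.inl (0:Fin 1), Sum.inr i)) '' {i : Fin n | lab i.val = gfun j} := by
    ext e
    induction e with
    | _ u v =>
      simp only [Set.mem_setOf_eq, SimpleGraph.mem_edgeSet, completeBipartiteGraph_adj,
        Set.mem_image]
      constructor
      · rintro ⟨hadj, hlab⟩
        rcases u with x | i <;> rcases v with y | i' <;> simp at hadj
        · refine ⟨i', ?_, ?_⟩
          · simpa [edgeLabel, hz, Fin.fin_one_eq_zero x] using hlab
          · rw [Fin.fin_one_eq_zero x]
        · refine ⟨i, ?_, ?_⟩
          · simpa [edgeLabel, hz, Fin.fin_one_eq_zero y, add_comm] using hlab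
          · rw [Fin.fin_one_eq_zero y, Sym2.eq_swap]
      · rintro ⟨i, hi, he⟩
        simp only [Sym2.eq_iff] at he
        rcases he with ⟨rfl, rfl⟩ | ⟨rfl, rfl⟩ <;>
          exact ⟨by simp, by simpa [edgeLabel, hz, add_comm] using hi⟩
  rw [hset, Set.ncard_image_of_injective _ hinj, leaf_ncard]

theorem stmt_6 : ∀ n : ℕ, 1 ≤ n →
    IsCordial (completeBipartiteGraph (Fin 1) (Fin n)) (ZMod 2 × ZMod 2) := by
  intro n _hn
  refine ⟨Sum.elim (fun _ => gfun 0) (fun i : Fin n => lab i.val), ?_, ?_⟩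
  · intro a b
    obtain ⟨ja, rfl⟩ := gfun_surj a
    obtain ⟨jb, rfl⟩ := gfun_surj b
    rw [vert_ncard, vert_ncard, cnt_eq _ ja.isLt, cnt_eq _ jb.isLt]
    rw [abs_le]
    fin_cases ja <;> fin_cases jb <;> simp <;> omega
  · intro a b
    obtain ⟨ja, rfl⟩ := gfun_surj a
    obtain ⟨jb, rfl⟩ := gfun_surj b
    rw [edge_ncard, edge_ncard, cnt_eq _ ja.isLt, cnt_eq _ jb.isLt]
    rw [abs_le]
    fin_cases ja <;> fin_cases jb <;> simp <;> omega
end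

section
/- If 4 divides m, then the complete bipartite graph K_{m,n} is Z_2×Z_2-cordial for every n ≥ 1. -/
open SimpleGraph

def gl (i : ℕ) : ZMod 2 × ZMod 2 := (↑(i / 2 % 2), ↑(i % 2))

lemma gl_mod (i : ℕ) : gl i = gl (i % 4) := by
  have h1 : i / 2 % 2 = i % 4 / 2 % 2 := by omega
  have h2 : i % 2 = i % 4 % 2 := by omega
  rw [gl, gl, h1, h2]

lemma exists_idx (c : ZMod 2 × ZMod 2) : ∃ k < 4, ∀ r < 4, (gl r = c ↔ r = k) := by
  revert c; decide

lemma cnt_formula (k : ℕ) (hk : k < 4) : ∀ N : ℕ,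
    ((Finset.range N).filter (fun i => i % 4 = k)).card = N / 4 + if k < N % 4 then 1 else 0 := by
  intro N
  induction N with
  | zero => simp
  | succ N ih =>
    by_cases h : N % 4 = k
    · rw [Finset.range_add_one, Finset.filter_insert, if_pos h,
        Finset.card_insert_of_notMem (by simp), ih]
      split_ifs <;> omega
    · rw [Finset.range_add_one, Finset.filter_insert, if_neg h, ih]
      split_ifs <;> omega

lemma count_gl (N : ℕ) (c : ZMod 2 × ZMod 2) : ∃ k < 4,
    (∑ i : Fin N, if gl ↑i = c then 1 else 0) = N / 4 + if k < N % 4 then 1 else 0 := by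
  obtain ⟨k, hk, hkc⟩ := exists_idx c
  refine ⟨k, hk, ?_⟩
  rw [← Finset.sum_range (fun i => if gl i = c then 1 else 0), ← Finset.card_filter,
    ← cnt_formula k hk N]
  congr 1
  apply Finset.filter_congr
  intro i _
  rw [gl_mod]
  simpa using hkc (i % 4) (Nat.mod_lt _ (by norm_num))

lemma count_gl_dvd (N : ℕ) (hN : 4 ∣ N) (c : ZMod 2 × ZMod 2) :
    (∑ i : Fin N, if gl ↑i = c then 1 else 0) = N / 4 := by
  obtain ⟨k, hk, h⟩ := count_gl N c
  have : N % 4 = 0 := by omega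
  simp [h, this]

theorem stmt_8 : ∀ m n : ℕ, 4 ∣ m → 1 ≤ n →
    IsCordial (completeBipartiteGraph (Fin m) (Fin n)) (ZMod 2 × ZMod 2) := by
  intro m n hm hn
  classical
  refine ⟨Sum.elim (fun i : Fin m => gl i) (fun j : Fin n => gl j), ?_, ?_⟩
  · -- vertex balance
    intro a b
    have key : ∀ c : ZMod 2 × ZMod 2, ∃ k < 4,
        ({v : Fin m ⊕ Fin n | Sum.elim (fun i : Fin m => gl ↑i) (fun j : Fin n => gl ↑j) v = c}.ncard)
          = m / 4 + (n / 4 + if k < n % 4 then 1 else 0) := by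
      intro c
      obtain ⟨k, hk, hcount⟩ := count_gl n c
      refine ⟨k, hk, ?_⟩
      have hset : {v : Fin m ⊕ Fin n | Sum.elim (fun i : Fin m => gl ↑i) (fun j : Fin n => gl ↑j) v = c}
          = ↑(Finset.univ.filter fun v : Fin m ⊕ Fin n =>
              Sum.elim (fun i : Fin m => gl ↑i) (fun j : Fin n => gl ↑j) v = c) := by
        ext v; simp
      rw [hset, Set.ncard_coe_finset, Finset.card_filter, Fintype.sum_sum_type]
      simp only [Sum.elim_inl, Sum.elim_inr]
      exact congrArg₂ (· + ·) (count_gl_dvd m hm c) hcount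
    obtain ⟨k, hk, e1⟩ := key a
    obtain ⟨k', hk', e2⟩ := key b
    rw [e1, e2]
    split_ifs <;> push_cast <;> simp [abs_le] <;> omega
  · -- edge balance
    intro a b
    have key : ∀ c : ZMod 2 × ZMod 2,
        {e ∈ (completeBipartiteGraph (Fin m) (Fin n)).edgeSet |
          edgeLabel (Sum.elim (fun i : Fin m => gl ↑i) (fun j : Fin n => gl ↑j)) e = c}.ncard
          = n * (m / 4) := by
      intro c
      have mem_iff : ∀ e : Sym2 (Fin m ⊕ Fin n),
          (e ∈ (completeBipartiteGraph (Fin m) (Fin n)).edgeSet ∧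
            edgeLabel (Sum.elim (fun i : Fin m => gl ↑i) (fun j : Fin n => gl ↑j)) e = c) ↔
          ∃ p : Fin m × Fin n, (gl ↑p.1 + gl ↑p.2 = c) ∧ s(Sum.inl p.1, Sum.inr p.2) = e := by
        intro e
        induction e using Sym2.ind with
        | _ u v =>
          cases u <;> cases v <;>
            simp [edgeLabel, Sym2.eq_iff, eq_comm, add_comm] <;>
            (constructor
             · intro h; exact ⟨_, _, by rw [add_comm]; exact h, rfl, rfl⟩
             · rintro ⟨x, y, h, rfl, rfl⟩; rw [add_comm]; exact h)
      have hset : {e ∈ (completeBipartiteGraph (Fin m) (Fin n)).edgeSet |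
          edgeLabel (Sum.elim (fun i : Fin m => gl ↑i) (fun j : Fin n => gl ↑j)) e = c}
          = ↑((Finset.univ.filter (fun p : Fin m × Fin n => gl ↑p.1 + gl ↑p.2 = c)).image
              (fun p => s(Sum.inl p.1, Sum.inr p.2))) := by
        ext e
        rw [Set.mem_setOf_eq]
        rw [mem_iff e]
        simp
      rw [hset, Set.ncard_coe_finset,
        Finset.card_image_of_injective _ (by
          intro p q h
          simp only [Sym2.eq_iff] at h
          rcases h with ⟨h1, h2⟩ | ⟨h1, h2⟩
          · exact Prod.ext (Sum.inl_injective h1) (Sum.inr_injective h2)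
          · exact absurd h1 (by simp)),
        Finset.card_filter]
      rw [Fintype.sum_prod_type_right]
      have inner : ∀ j : Fin n, (∑ i : Fin m, if gl ↑i + gl ↑j = c then 1 else 0) = m / 4 := by
        intro j
        rw [← count_gl_dvd m hm (c - gl ↑j)]
        apply Finset.sum_congr rfl
        intro i _
        congr 1
        simp [eq_sub_iff_add_eq]
      rw [Finset.sum_congr rfl (fun j _ => inner j)]
      simp [mul_comm]
    rw [key a, key b]
    simp
end
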